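/- Let G be a strongly connected finite directed graph without loops with sink s. Starting from a rotor configuration T_0 ∈ Rec(G) with a chip at x_0, let T_k and x_k be the rotor configuration and chip location after k rotor-router steps. If T_k ∉ Rec(G), then T_k ∈ Cyc_{x_k}(G); that is, T_k contains an oriented cycle, and every oriented cycle in T_k passes through the rotor at the current chip location x_k (deleting the rotor T_k(x_k) leaves no oriented cycles). -/
import Mathlib


/-- A finite directed multigraph without loops, together with a distinguished
sink vertex and, for each vertex `x`, a cyclic ordering of the edges emanating
from `x`: the outgoing edges at `x` are indexed by `ZMod (deg x)` (in cyclic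
order), and `head x e` is the target of the edge `e`. -/
structure RotorGraph (V : Type*) [Fintype V] [DecidableEq V] where
  sink : V
  deg : V → ℕ
  deg_pos : ∀ x, 0 < deg x
  head : ∀ x : V, ZMod (deg x) → V
  no_loops : ∀ x e, head x e ≠ x

namespace RotorGraph

variable {V : Type*} [Fintype V] [DecidableEq V] (G : RotorGraph V)

/-- `x` is adjacent to `y` if some edge goes from `x` to `y`. -/
def Adj (x y : V) : Prop := ∃ e, G.head x e = y

/-- `G` is strongly connected: every vertex has a directed path to every vertex. -/
def StronglyConnected : Prop := ∀ x y : V, Relation.ReflTransGen G.Adj x y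

/-- A rotor configuration: each vertex carries a rotor pointing along one of
its outgoing edges.  (The value at the sink is irrelevant: it is never read
nor modified by the rotor-router walk.) -/
abbrev Conf := ∀ x : V, ZMod (G.deg x)

/-- One step of rotor-router walk for the state (rotor configuration, chip
location): if the chip is not at the sink, first increment the rotor at the
chip's location to the next edge in the cyclic ordering, then move the chip
along this new edge.  States whose chip is at the sink are absorbing. -/
def step (p : G.Conf × V) : G.Conf × V :=
  if p.2 = G.sink then p
  else (Function.update p.1 p.2 (p.1 p.2 + 1), G.head p.2 (p.1 p.2 + 1))

/-- The target of the rotor at `x`. -/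
def next (T : G.Conf) (x : V) : V := G.head x (T x)

/-- The rotors of `T` contain an oriented cycle all of whose vertices lie in `A`. -/
def HasCycleIn (T : G.Conf) (A : Set V) : Prop :=
  ∃ (m : ℕ) (x : V), 0 < m ∧ (∀ i < m, (G.next T)^[i] x ∈ A) ∧ (G.next T)^[m] x = x

/-- `T ∈ Rec(G)`: the rotors at the non-sink vertices form no oriented cycle,
i.e. they form an oriented spanning tree rooted at the sink. -/
def Rec (T : G.Conf) : Prop := ¬ G.HasCycleIn T {y | y ≠ G.sink}

/-- `e_x(T)`: start a chip at `x` and let it perform rotor-router walk until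
it first reaches the sink; `chip x T` is the resulting rotor configuration. -/
noncomputable def chip (x : V) (T : G.Conf) : G.Conf :=
  haveI := Classical.dec (∃ n, (G.step^[n] (T, x)).2 = G.sink)
  if h : ∃ n, (G.step^[n] (T, x)).2 = G.sink then (G.step^[Nat.find h] (T, x)).1 else T

/-- `T ∈ Cyc_x(G)`: the rotors contain an oriented cycle, and deleting the
rotor at `x` leaves no oriented cycle (equivalently, every oriented cycle of
`T` passes through `x`). -/
def Cyc (x : V) (T : G.Conf) : Prop :=
  G.HasCycleIn T {y | y ≠ G.sink} ∧ ¬ G.HasCycleIn T {y | y ≠ G.sink ∧ y ≠ x}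

lemma invariant_step (p : G.Conf × V)
    (hp : ¬ G.HasCycleIn p.1 {y | y ≠ G.sink ∧ y ≠ p.2}) :
    ¬ G.HasCycleIn (G.step p).1 {y | y ≠ G.sink ∧ y ≠ (G.step p).2} := by
  obtain ⟨T, x⟩ := p
  by_cases hx : x = G.sink
  · simpa [step, hx] using hp
  · simp only [step, hx, if_neg, not_false_iff]
    set T' : G.Conf := Function.update T x (T x + 1) with hT'
    set x' : V := G.head x (T x + 1) with hx'
    rintro ⟨m, z, hm, hA, hz⟩
    -- every cycle vertex avoids x
    have hnx : ∀ i < m, (G.next T')^[i] z ≠ x := by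
      intro i hi hix
      have hnext : (G.next T')^[i+1] z = x' := by
        rw [Function.iterate_succ_apply', hix]
        simp [next, hT', hx']
      rcases lt_or_eq_of_le (Nat.succ_le_of_lt hi) with h1 | h1
      · exact ((hA (i+1) h1).2) hnext
      · have hz0 : z ≠ x' := (hA 0 hm).2
        rw [show i + 1 = m from h1, hz] at hnext
        exact hz0 hnext
    -- iterates of T' and T agree
    have hag : ∀ i ≤ m, (G.next T')^[i] z = (G.next T)^[i] z := by
      intro i hi
      induction i with
      | zero => rfl
      | succ j ih =>
        rw [Function.iterate_succ_apply', Function.iterate_succ_apply',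
          ← ih (Nat.le_of_succ_le hi)]
        have hne := hnx j (Nat.lt_of_succ_le hi)
        simp [next, hT', Function.update_of_ne hne]
    exact hp ⟨m, z, hm, fun i hi => by
        rw [← hag i (le_of_lt hi)]; exact ⟨(hA i hi).1, hnx i hi⟩,
      by rw [← hag m le_rfl]; exact hz⟩

lemma invariant (p : G.Conf × V)
    (hp : ¬ G.HasCycleIn p.1 {y | y ≠ G.sink ∧ y ≠ p.2}) (k : ℕ) :
    ¬ G.HasCycleIn (G.step^[k] p).1 {y | y ≠ G.sink ∧ y ≠ (G.step^[k] p).2} := by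
  induction k with
  | zero => exact hp
  | succ n ih =>
    rw [Function.iterate_succ_apply']
    exact G.invariant_step _ ih

end RotorGraph

/-- Lemma 2(i): starting from `T₀ ∈ Rec(G)` with a chip at `x₀`, if after `k`
rotor-router steps the configuration `T_k` is not in `Rec(G)`, then
`T_k ∈ Cyc_{x_k}(G)`, where `x_k` is the chip location after `k` steps. -/
theorem stmt1 {V : Type*} [Fintype V] [DecidableEq V] (G : RotorGraph V)
    (hG : G.StronglyConnected) (T0 : G.Conf) (x0 : V) (hT0 : G.Rec T0) (k : ℕ)
    (h : ¬ G.Rec (G.step^[k] (T0, x0)).1) :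
    G.Cyc (G.step^[k] (T0, x0)).2 (G.step^[k] (T0, x0)).1 := by
  refine ⟨not_not.mp h, ?_⟩
  refine G.invariant (T0, x0) ?_ k
  intro hc
  exact hT0 (⟨hc.choose, hc.choose_spec.choose, hc.choose_spec.choose_spec.1,
    fun i hi => (hc.choose_spec.choose_spec.2.1 i hi).1,
    hc.choose_spec.choose_spec.2.2⟩)
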